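/- For a generalized St. Petersburg(α, p) random variable X with α > 0 and 0 < p = 1 - q < 1, and X₁, X₂ independent copies, liminf_{x→∞} P{X₁+X₂ > x}/P{X₁ > x} = 2 and limsup_{x→∞} P{X₁+X₂ > x}/P{X₁ > x} = 2/q. In particular no generalized St. Petersburg distribution is subexponential. -/

import Mathlib

open MeasureTheory ProbabilityTheory Filter Topology
open scoped ENNReal

set_option linter.unusedSectionVars false
set_option maxHeartbeats 1000000

namespace StP17Aux

variable {Ω : Type*} [MeasurableSpace Ω] {μ : Measure Ω} [IsProbabilityMeasure μ]
variable {q γ : ℝ} {X : Ω → ℝ}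

lemma pow_strictMono (hγ : 1 < γ) : StrictMono (fun k : ℕ => γ ^ k) :=
  fun _ _ h => pow_lt_pow_right₀ hγ h

lemma measure_union_values (hγ : 1 < γ) (hmX : Measurable X)
    (hq0 : 0 < q) (hq1 : q < 1)
    (hpt : ∀ k : ℕ, μ {ω | X ω = γ ^ (k + 1)} = ENNReal.ofReal (q ^ k * (1 - q)))
    (m : ℕ) :
    μ (⋃ j : ℕ, {ω | X ω = γ ^ (m + 1 + j)}) = ENNReal.ofReal (q ^ m) := by
  have hdisj : Pairwise (Function.onFun Disjoint fun j : ℕ => {ω | X ω = γ ^ (m + 1 + j)}) := by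
    intro i j hij
    refine Set.disjoint_left.2 fun ω h1 h2 => hij ?_
    have := (pow_strictMono hγ).injective (h1.symm.trans h2 : γ ^ (m+1+i) = γ ^ (m+1+j))
    omega
  have hmeas : ∀ j : ℕ, MeasurableSet {ω | X ω = γ ^ (m + 1 + j)} := fun j =>
    hmX (measurableSet_singleton _)
  rw [measure_iUnion hdisj hmeas]
  have hre : ∀ j : ℕ, μ {ω | X ω = γ ^ (m + 1 + j)}
      = ENNReal.ofReal (q ^ m) * ENNReal.ofReal (q ^ j * (1 - q)) := by
    intro j
    have h1 : m + 1 + j = (m + j) + 1 := by omega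
    rw [h1, hpt (m + j), ← ENNReal.ofReal_mul (by positivity), pow_add]
    congr 1
    ring_nf
  simp_rw [hre]
  rw [ENNReal.tsum_mul_left]
  have hsum : ∑' j : ℕ, ENNReal.ofReal (q ^ j * (1 - q)) = 1 := by
    rw [← ENNReal.ofReal_tsum_of_nonneg (fun j => mul_nonneg (by positivity) (by linarith))
      ((summable_geometric_of_lt_one hq0.le hq1).mul_right _)]
    rw [tsum_mul_right, tsum_geometric_of_lt_one hq0.le hq1,
      inv_mul_cancel₀ (by linarith)]
    exact ENNReal.ofReal_one
  rw [hsum, mul_one]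

lemma ae_values (hU : ∀ m : ℕ, μ (⋃ j : ℕ, {ω | X ω = γ ^ (m + 1 + j)}) = ENNReal.ofReal (q ^ m))
    (hmX : Measurable X) :
    ∀ᵐ ω ∂μ, ∃ k : ℕ, X ω = γ ^ (k + 1) := by
  have h0 := hU 0
  have hset : (⋃ j : ℕ, {ω | X ω = γ ^ (0 + 1 + j)}) = {ω | ∃ k : ℕ, X ω = γ ^ (k + 1)} := by
    ext ω
    simp only [Set.mem_iUnion, Set.mem_setOf_eq]
    constructor
    · rintro ⟨j, hj⟩; exact ⟨j, by rw [hj]; congr 1; omega⟩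
    · rintro ⟨k, hk⟩; exact ⟨k, by rw [hk]; congr 1; omega⟩
  rw [hset] at h0
  simp only [pow_zero, ENNReal.ofReal_one] at h0
  have hmeas : MeasurableSet {ω | ∃ k : ℕ, X ω = γ ^ (k + 1)} := by
    have : {ω | ∃ k : ℕ, X ω = γ ^ (k + 1)} = ⋃ k : ℕ, {ω | X ω = γ ^ (k + 1)} := by
      ext ω; simp [Set.mem_iUnion]
    rw [this]
    exact MeasurableSet.iUnion fun k => hmX (measurableSet_singleton _)
  rw [ae_iff]
  have : {ω | ¬∃ k : ℕ, X ω = γ ^ (k + 1)} = {ω | ∃ k : ℕ, X ω = γ ^ (k + 1)}ᶜ := rfl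
  rw [this, measure_compl hmeas (measure_ne_top _ _), h0, measure_univ, tsub_self]

lemma tail_le (hγ : 1 < γ)
    (hU : ∀ m : ℕ, μ (⋃ j : ℕ, {ω | X ω = γ ^ (m + 1 + j)}) = ENNReal.ofReal (q ^ m))
    (hae : ∀ᵐ ω ∂μ, ∃ k : ℕ, X ω = γ ^ (k + 1))
    {m : ℕ} {x : ℝ} (hx : γ ^ m ≤ x) :
    μ {ω | x < X ω} ≤ ENNReal.ofReal (q ^ m) := by
  rw [← hU m]
  refine measure_mono_ae ?_
  filter_upwards [hae] with ω hω hmem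
  obtain ⟨k, hk⟩ := hω
  have hlt : γ ^ m < γ ^ (k + 1) := lt_of_le_of_lt hx (by rw [← hk]; exact hmem)
  have hmk : m < k + 1 := (pow_strictMono hγ).lt_iff_lt.1 hlt
  refine Set.mem_iUnion.2 ⟨k - m, ?_⟩
  show X ω = γ ^ (m + 1 + (k - m))
  rw [hk]; congr 1; omega

lemma tail_ge (hγ : 1 < γ)
    (hU : ∀ m : ℕ, μ (⋃ j : ℕ, {ω | X ω = γ ^ (m + 1 + j)}) = ENNReal.ofReal (q ^ m))
    {m : ℕ} {x : ℝ} (hx : x < γ ^ (m + 1)) :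
    ENNReal.ofReal (q ^ m) ≤ μ {ω | x < X ω} := by
  rw [← hU m]
  refine measure_mono ?_
  rintro ω hω
  obtain ⟨j, hj⟩ := Set.mem_iUnion.1 hω
  have h1 : γ ^ (m + 1) ≤ γ ^ (m + 1 + j) :=
    pow_le_pow_right₀ (le_of_lt hγ) (by omega)
  have h2 : x < γ ^ (m + 1 + j) := lt_of_lt_of_le hx h1
  have hXω : X ω = γ ^ (m + 1 + j) := hj
  exact Set.mem_setOf_eq ▸ (hXω ▸ h2)

lemma tail_eq (hγ : 1 < γ)
    (hU : ∀ m : ℕ, μ (⋃ j : ℕ, {ω | X ω = γ ^ (m + 1 + j)}) = ENNReal.ofReal (q ^ m))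
    (hae : ∀ᵐ ω ∂μ, ∃ k : ℕ, X ω = γ ^ (k + 1))
    {m : ℕ} {x : ℝ} (h1 : γ ^ m ≤ x) (h2 : x < γ ^ (m + 1)) :
    μ {ω | x < X ω} = ENNReal.ofReal (q ^ m) :=
  le_antisymm (tail_le hγ hU hae h1) (tail_ge hγ hU h2)

end StP17Aux

open StP17Aux

/-- For a generalized St. Petersburg(α, p) distribution
(`P{X = q^{-k/α}} = q^{k-1}p`, `q = 1-p`) and independent copies `X₁, X₂`:
`liminf_{x→∞} P{X₁+X₂>x}/P{X₁>x} = 2` and `limsup_{x→∞} P{X₁+X₂>x}/P{X₁>x} = 2/q`.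
In particular, no generalized St. Petersburg distribution is subexponential. -/
theorem stmt_17 {Ω : Type*} [MeasurableSpace Ω] (μ : Measure Ω) [IsProbabilityMeasure μ]
    (α p : ℝ) (hα : 0 < α) (hp : p ∈ Set.Ioo (0 : ℝ) 1)
    (X₁ X₂ : Ω → ℝ) (hm₁ : Measurable X₁) (hm₂ : Measurable X₂)
    (hindep : IndepFun X₁ X₂ μ)
    (hd₁ : ∀ k : ℕ, 1 ≤ k →
      μ {ω | X₁ ω = (1 - p) ^ (-(k : ℝ) / α)} = ENNReal.ofReal ((1 - p) ^ (k - 1) * p))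
    (hd₂ : ∀ k : ℕ, 1 ≤ k →
      μ {ω | X₂ ω = (1 - p) ^ (-(k : ℝ) / α)} = ENNReal.ofReal ((1 - p) ^ (k - 1) * p)) :
    liminf (fun x : ℝ =>
        (μ {ω | x < X₁ ω + X₂ ω}).toReal / (μ {ω | x < X₁ ω}).toReal) atTop = 2 ∧
    limsup (fun x : ℝ =>
        (μ {ω | x < X₁ ω + X₂ ω}).toReal / (μ {ω | x < X₁ ω}).toReal) atTop =
      2 / (1 - p) := by
  obtain ⟨hp0, hp1⟩ := hp
  set q : ℝ := 1 - p with hq_def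
  have hq0 : 0 < q := by simp only [hq_def]; linarith
  have hq1 : q < 1 := by simp only [hq_def]; linarith
  set γ : ℝ := q ^ (-1/α : ℝ) with hγ_def
  have hγ : 1 < γ := by
    rw [hγ_def, Real.one_lt_rpow_iff_of_pos hq0]
    right
    constructor
    · exact hq1
    · rw [neg_div]; simp only [Left.neg_neg_iff]; positivity
  have hγ0 : (0:ℝ) < γ := lt_trans one_pos hγ
  have hval : ∀ n : ℕ, q ^ (-(n:ℝ)/α) = γ ^ n := by
    intro n
    rw [hγ_def, ← Real.rpow_natCast (q ^ (-1/α : ℝ)) n, ← Real.rpow_mul hq0.le]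
    congr 1
    ring
  -- point masses
  have hpt₁ : ∀ k : ℕ, μ {ω | X₁ ω = γ ^ (k+1)} = ENNReal.ofReal (q^k * (1-q)) := by
    intro k
    have h := hd₁ (k+1) (by omega)
    rw [hval (k+1)] at h
    simp only [Nat.add_sub_cancel] at h
    rw [show (1:ℝ)-q = p by rw [hq_def]; ring]
    exact h
  have hpt₂ : ∀ k : ℕ, μ {ω | X₂ ω = γ ^ (k+1)} = ENNReal.ofReal (q^k * (1-q)) := by
    intro k
    have h := hd₂ (k+1) (by omega)
    rw [hval (k+1)] at h
    simp only [Nat.add_sub_cancel] at h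
    rw [show (1:ℝ)-q = p by rw [hq_def]; ring]
    exact h
  have hU₁ := measure_union_values hγ hm₁ hq0 hq1 hpt₁
  have hU₂ := measure_union_values hγ hm₂ hq0 hq1 hpt₂
  have hae₁ := ae_values hU₁ hm₁
  have hae₂ := ae_values hU₂ hm₂
  have hlow₁ : ∀ᵐ ω ∂μ, γ ≤ X₁ ω := by
    filter_upwards [hae₁] with ω ⟨k, hk⟩
    rw [hk]
    calc γ = γ ^ 1 := (pow_one γ).symm
    _ ≤ γ ^ (k+1) := pow_le_pow_right₀ hγ.le (by omega)
  have hlow₂ : ∀ᵐ ω ∂μ, γ ≤ X₂ ω := by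
    filter_upwards [hae₂] with ω ⟨k, hk⟩
    rw [hk]
    calc γ = γ ^ 1 := (pow_one γ).symm
    _ ≤ γ ^ (k+1) := pow_le_pow_right₀ hγ.le (by omega)
  -- K finder
  have hKfind : ∀ (n : ℕ) (x : ℝ), 1 ≤ n → γ^n ≤ x → ∃ K : ℕ, n ≤ K ∧ γ^K ≤ x ∧ x < γ^(K+1) := by
    intro n x hn hx
    have hex : ∃ k : ℕ, x < γ ^ k := pow_unbounded_of_one_lt x hγ
    classical
    have hKlt := Nat.find_spec hex
    set K' := Nat.find hex with hK'
    have hK'pos : 0 < K' := by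
      rcases Nat.eq_zero_or_pos K' with h0 | h
      · exfalso
        have : x < γ ^ 0 := h0 ▸ hKlt
        have h1 : (1:ℝ) ≤ γ ^ n := one_le_pow₀ hγ.le
        simp only [pow_zero] at this
        linarith
      · exact h
    refine ⟨K' - 1, ?_, ?_, ?_⟩
    · have : γ ^ n ≤ x := hx
      have hxK : x < γ ^ K' := hKlt
      have : γ ^ n < γ ^ K' := lt_of_le_of_lt hx hxK
      have := (pow_strictMono hγ).lt_iff_lt.1 this
      omega
    · have := Nat.find_min hex (m := K' - 1) (by omega)
      push_neg at this
      exact this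
    · have h1 : K' - 1 + 1 = K' := by omega
      rw [h1]
      exact hKlt
  -- exact tails
  have htail₁ : ∀ (K : ℕ) (x : ℝ), γ^K ≤ x → x < γ^(K+1) →
      μ {ω | x < X₁ ω} = ENNReal.ofReal (q^K) := fun K x h1 h2 => tail_eq hγ hU₁ hae₁ h1 h2
  have htail₂ : ∀ (K : ℕ) (x : ℝ), γ^K ≤ x → x < γ^(K+1) →
      μ {ω | x < X₂ ω} = ENNReal.ofReal (q^K) := fun K x h1 h2 => tail_eq hγ hU₂ hae₂ h1 h2
  -- the ratio function
  set R : ℝ → ℝ := fun x =>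
    (μ {ω | x < X₁ ω + X₂ ω}).toReal / (μ {ω | x < X₁ ω}).toReal with hR_def
  have hRnonneg : ∀ x, 0 ≤ R x := fun x => div_nonneg ENNReal.toReal_nonneg ENNReal.toReal_nonneg
  -- constant C' : gap bound
  obtain ⟨C, hC⟩ : ∃ C : ℕ, 1/(γ-1) < γ ^ C := pow_unbounded_of_one_lt _ hγ
  have hgap : ∀ K : ℕ, C ≤ K → γ ^ (K - C) + γ ^ K ≤ γ ^ (K+1) := by
    intro K hCK
    have h1 : (1:ℝ) ≤ γ ^ C * (γ - 1) :=
      ((div_lt_iff₀ (by linarith : (0:ℝ) < γ - 1)).1 hC).le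
    have h2 : γ ^ (K - C) * 1 ≤ γ ^ (K - C) * (γ ^ C * (γ - 1)) :=
      mul_le_mul_of_nonneg_left h1 (by positivity)
    have h3 : γ ^ (K - C) * γ ^ C = γ ^ K := by
      rw [← pow_add]; congr 1; omega
    have h4 : γ ^ (K+1) = γ ^ K * γ := pow_succ γ K
    nlinarith [pow_pos hγ0 K, pow_pos hγ0 (K - C)]
  -- global lower bound E2
  have hE2 : ∀ (n : ℕ), 1 ≤ n → ∀ x : ℝ, γ^n ≤ x → 2 - q^n ≤ R x := by
    intro n hn x hx
    obtain ⟨K, hnK, hK1, hK2⟩ := hKfind n x hn hx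
    have hd1 : μ {ω | x < X₁ ω} = ENNReal.ofReal (q^K) := htail₁ K x hK1 hK2
    have hd2 : μ {ω | x < X₂ ω} = ENNReal.ofReal (q^K) := htail₂ K x hK1 hK2
    set A : Set Ω := X₁ ⁻¹' (Set.Ioi x) with hA_def
    set B : Set Ω := X₂ ⁻¹' (Set.Ioi x) with hB_def
    have hAm : MeasurableSet A := hm₁ measurableSet_Ioi
    have hBm : MeasurableSet B := hm₂ measurableSet_Ioi
    have hAB : μ (A ∩ B) = μ A * μ B :=
      hindep.measure_inter_preimage_eq_mul _ _ measurableSet_Ioi measurableSet_Ioi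
    have hsub : μ (A ∪ B) ≤ μ {ω | x < X₁ ω + X₂ ω} := by
      refine measure_mono_ae ?_
      filter_upwards [hlow₁, hlow₂] with ω h1 h2 hmem
      rcases hmem with h | h
      · have : x < X₁ ω := h
        show x < X₁ ω + X₂ ω
        linarith
      · have : x < X₂ ω := h
        show x < X₁ ω + X₂ ω
        linarith
    have hqK0 : (0:ℝ) < q ^ K := by positivity
    have hAv : μ A = ENNReal.ofReal (q^K) := hd1
    have hBv : μ B = ENNReal.ofReal (q^K) := hd2
    have hinter : μ (A ∪ B) + μ (A ∩ B) = μ A + μ B := measure_union_add_inter A hBm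
    -- convert to reals
    have hfin : ∀ s : Set Ω, μ s ≠ ⊤ := fun s => measure_ne_top μ s
    have htr : (μ (A ∪ B)).toReal + (μ (A ∩ B)).toReal = (μ A).toReal + (μ B).toReal := by
      rw [← ENNReal.toReal_add (hfin _) (hfin _), ← ENNReal.toReal_add (hfin _) (hfin _), hinter]
    have hABr : (μ (A ∩ B)).toReal = q^K * q^K := by
      rw [hAB, hAv, hBv, ENNReal.toReal_mul, ENNReal.toReal_ofReal hqK0.le]
    have hAr : (μ A).toReal = q^K := by rw [hAv, ENNReal.toReal_ofReal hqK0.le]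
    have hBr : (μ B).toReal = q^K := by rw [hBv, ENNReal.toReal_ofReal hqK0.le]
    have hnum : 2 * q^K - q^K * q^K ≤ (μ {ω | x < X₁ ω + X₂ ω}).toReal := by
      have h1 : (μ (A ∪ B)).toReal ≤ (μ {ω | x < X₁ ω + X₂ ω}).toReal :=
        ENNReal.toReal_mono (hfin _) hsub
      rw [hAr, hBr] at htr
      rw [hABr] at htr
      linarith
    have hqnK : q ^ K ≤ q ^ n := pow_le_pow_of_le_one hq0.le hq1.le hnK
    show 2 - q^n ≤ (μ {ω | x < X₁ ω + X₂ ω}).toReal / (μ {ω | x < X₁ ω}).toReal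
    rw [hd1, ENNReal.toReal_ofReal hqK0.le, le_div_iff₀ hqK0]
    nlinarith [hqK0, pow_pos hq0 n]
  -- global upper bound E1
  have hE1 : ∀ (i : ℕ) (x : ℝ), γ^(2+2*C+i) ≤ x → R x ≤ 2/q + q^i := by
    intro i x hx
    obtain ⟨K, hnK, hK1, hK2⟩ := hKfind (2+2*C+i) x (by omega) hx
    obtain ⟨j, hij, hKeq⟩ : ∃ j : ℕ, i ≤ j ∧ K = 2+2*C+j := ⟨K - (2+2*C), by omega, by omega⟩
    set K1 : ℕ := 1+2*C+j with hK1_def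
    have hKK1 : K = K1 + 1 := by omega
    set c : ℝ := x - γ^K1 with hc_def
    have hgap1 := hgap K1 (by omega)
    have hK1C : K1 - C = 1+C+j := by omega
    rw [hK1C] at hgap1
    have hc : γ^(1+C+j) ≤ c := by
      have : γ^(K1+1) ≤ x := by rw [← hKK1]; exact hK1
      simp only [hc_def]
      linarith
    have hd1 : μ {ω | x < X₁ ω} = ENNReal.ofReal (q^K) := htail₁ K x hK1 hK2
    set A₁ : Set Ω := X₁ ⁻¹' (Set.Ioi (γ^K1)) with hA1_def
    set A₂ : Set Ω := X₂ ⁻¹' (Set.Ioi (γ^K1)) with hA2_def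
    set B₁ : Set Ω := X₁ ⁻¹' (Set.Ioi c) with hB1_def
    set B₂ : Set Ω := X₂ ⁻¹' (Set.Ioi c) with hB2_def
    have hincl : {ω | x < X₁ ω + X₂ ω} ⊆ A₁ ∪ A₂ ∪ (B₁ ∩ B₂) := by
      intro ω hω
      have hωs : x < X₁ ω + X₂ ω := hω
      by_cases h1 : γ^K1 < X₁ ω
      · exact Or.inl (Or.inl h1)
      by_cases h2 : γ^K1 < X₂ ω
      · exact Or.inl (Or.inr h2)
      push_neg at h1 h2
      refine Or.inr ⟨?_, ?_⟩
      · show c < X₁ ω; simp only [hc_def]; linarith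
      · show c < X₂ ω; simp only [hc_def]; linarith
    have hmu : μ {ω | x < X₁ ω + X₂ ω} ≤ μ A₁ + μ A₂ + μ B₁ * μ B₂ := by
      calc μ {ω | x < X₁ ω + X₂ ω} ≤ μ (A₁ ∪ A₂ ∪ (B₁ ∩ B₂)) := measure_mono hincl
      _ ≤ μ (A₁ ∪ A₂) + μ (B₁ ∩ B₂) := measure_union_le _ _
      _ ≤ μ A₁ + μ A₂ + μ (B₁ ∩ B₂) := by
          gcongr
          exact measure_union_le _ _
      _ = μ A₁ + μ A₂ + μ B₁ * μ B₂ := by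
          rw [hindep.measure_inter_preimage_eq_mul _ _ measurableSet_Ioi measurableSet_Ioi]
    have hA1v : μ A₁ = ENNReal.ofReal (q^K1) :=
      htail₁ K1 (γ^K1) le_rfl (pow_lt_pow_right₀ hγ (by omega))
    have hA2v : μ A₂ = ENNReal.ofReal (q^K1) :=
      htail₂ K1 (γ^K1) le_rfl (pow_lt_pow_right₀ hγ (by omega))
    have hB1v : μ B₁ ≤ ENNReal.ofReal (q^(1+C+j)) := tail_le hγ hU₁ hae₁ hc
    have hB2v : μ B₂ ≤ ENNReal.ofReal (q^(1+C+j)) := tail_le hγ hU₂ hae₂ hc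
    have hmu2 : μ {ω | x < X₁ ω + X₂ ω}
        ≤ ENNReal.ofReal (2*q^K1 + q^(1+C+j)*q^(1+C+j)) := by
      calc μ {ω | x < X₁ ω + X₂ ω} ≤ μ A₁ + μ A₂ + μ B₁ * μ B₂ := hmu
      _ ≤ ENNReal.ofReal (q^K1) + ENNReal.ofReal (q^K1)
          + ENNReal.ofReal (q^(1+C+j)) * ENNReal.ofReal (q^(1+C+j)) := by
          exact add_le_add (add_le_add hA1v.le hA2v.le) (mul_le_mul' hB1v hB2v)
      _ = ENNReal.ofReal (2*q^K1 + q^(1+C+j)*q^(1+C+j)) := by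
          rw [← ENNReal.ofReal_mul (by positivity), ← ENNReal.ofReal_add (by positivity) (by positivity),
            ← ENNReal.ofReal_add (by positivity) (by positivity)]
          congr 1
          ring
    have hnumr : (μ {ω | x < X₁ ω + X₂ ω}).toReal ≤ 2*q^K1 + q^(1+C+j)*q^(1+C+j) := by
      have := ENNReal.toReal_mono ENNReal.ofReal_ne_top hmu2
      rwa [ENNReal.toReal_ofReal (by positivity)] at this
    have hqK0 : (0:ℝ) < q ^ K := by positivity
    have hstep : R x ≤ 2/q + q^j := by
      show (μ {ω | x < X₁ ω + X₂ ω}).toReal / (μ {ω | x < X₁ ω}).toReal ≤ 2/q + q^j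
      rw [hd1, ENNReal.toReal_ofReal hqK0.le, div_le_iff₀ hqK0]
      have hexp : (2/q + q^j) * q^K = 2*q^K1 + q^(1+C+j)*q^(1+C+j) := by
        rw [hKK1, hK1_def]
        rw [show (1+2*C+j)+1 = 2+2*C+j by omega]
        rw [show 2+2*C+j = 1+(1+2*C+j) by omega, pow_add, pow_add, pow_add, pow_add]
        field_simp
        ring
      rw [hexp]
      exact hnumr
    have : q^j ≤ q^i := pow_le_pow_of_le_one hq0.le hq1.le hij
    linarith
  -- E3 : limsup sequence lower bound at x = γ^n + 1
  have hE3 : ∀ i : ℕ, 2/q - q^i ≤ R (γ^(2+2*C+i) + 1) := by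
    intro i
    set n : ℕ := 2+2*C+i with hn_def
    set n1 : ℕ := 1+2*C+i with hn1_def
    have hnn1 : n = n1 + 1 := by omega
    set x : ℝ := γ^n + 1 with hx_def
    have hx1 : γ^n ≤ x := by simp only [hx_def]; linarith
    have hx2 : x < γ^(n+1) := by
      have hg := hgap n (by omega)
      have h1 : (1:ℝ) < γ^(n-C) := by
        calc (1:ℝ) < γ := hγ
        _ = γ^1 := (pow_one γ).symm
        _ ≤ γ^(n-C) := pow_le_pow_right₀ hγ.le (by omega)
      simp only [hx_def]
      linarith
    have hd1 : μ {ω | x < X₁ ω} = ENNReal.ofReal (q^n) := htail₁ n x hx1 hx2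
    set A : Set Ω := X₁ ⁻¹' (Set.Ioi (γ^n1)) with hA_def
    set B : Set Ω := X₂ ⁻¹' (Set.Ioi (γ^n1)) with hB_def
    have hAm : MeasurableSet A := hm₁ measurableSet_Ioi
    have hBm : MeasurableSet B := hm₂ measurableSet_Ioi
    have hAv : μ A = ENNReal.ofReal (q^n1) :=
      htail₁ n1 (γ^n1) le_rfl (pow_lt_pow_right₀ hγ (by omega))
    have hBv : μ B = ENNReal.ofReal (q^n1) :=
      htail₂ n1 (γ^n1) le_rfl (pow_lt_pow_right₀ hγ (by omega))
    have hAB : μ (A ∩ B) = μ A * μ B :=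
      hindep.measure_inter_preimage_eq_mul _ _ measurableSet_Ioi measurableSet_Ioi
    have hsub : μ (A ∪ B) ≤ μ {ω | x < X₁ ω + X₂ ω} := by
      refine measure_mono_ae ?_
      filter_upwards [hae₁, hae₂, hlow₁, hlow₂] with ω ⟨k1, hk1⟩ ⟨k2, hk2⟩ hl1 hl2 hmem
      have key : ∀ y z : ℝ, (∃ k : ℕ, y = γ^(k+1)) → γ^n1 < y → γ ≤ z → x < y + z := by
        rintro y z ⟨k, hk⟩ hy hz
        have h1 : γ^n1 < γ^(k+1) := hk ▸ hy
        have h2 : n1 < k+1 := (pow_strictMono hγ).lt_iff_lt.1 h1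
        have h3 : γ^n ≤ y := by
          rw [hk]
          exact pow_le_pow_right₀ hγ.le (by omega)
        simp only [hx_def]
        linarith
      rcases hmem with h | h
      · exact key _ _ ⟨k1, hk1⟩ h hl2
      · have := key (X₂ ω) (X₁ ω) ⟨k2, hk2⟩ h hl1
        show x < X₁ ω + X₂ ω
        linarith
    have hfin : ∀ s : Set Ω, μ s ≠ ⊤ := fun s => measure_ne_top μ s
    have hinter : μ (A ∪ B) + μ (A ∩ B) = μ A + μ B := measure_union_add_inter A hBm
    have htr : (μ (A ∪ B)).toReal + (μ (A ∩ B)).toReal = (μ A).toReal + (μ B).toReal := by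
      rw [← ENNReal.toReal_add (hfin _) (hfin _), ← ENNReal.toReal_add (hfin _) (hfin _), hinter]
    have hq1pos : (0:ℝ) < q^n1 := by positivity
    have hABr : (μ (A ∩ B)).toReal = q^n1 * q^n1 := by
      rw [hAB, hAv, hBv, ENNReal.toReal_mul, ENNReal.toReal_ofReal hq1pos.le]
    have hAr : (μ A).toReal = q^n1 := by rw [hAv, ENNReal.toReal_ofReal hq1pos.le]
    have hBr : (μ B).toReal = q^n1 := by rw [hBv, ENNReal.toReal_ofReal hq1pos.le]
    have hnum : 2 * q^n1 - q^n1 * q^n1 ≤ (μ {ω | x < X₁ ω + X₂ ω}).toReal := by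
      have h1 : (μ (A ∪ B)).toReal ≤ (μ {ω | x < X₁ ω + X₂ ω}).toReal :=
        ENNReal.toReal_mono (hfin _) hsub
      rw [hAr, hBr, hABr] at htr
      linarith
    have hqn0 : (0:ℝ) < q^n := by positivity
    show 2/q - q^i ≤ (μ {ω | x < X₁ ω + X₂ ω}).toReal / (μ {ω | x < X₁ ω}).toReal
    rw [hd1, ENNReal.toReal_ofReal hqn0.le, le_div_iff₀ hqn0]
    have hkey : (2/q - q^i) * q^n ≤ 2*q^n1 - q^n1*q^n1 := by
      have e1 : q^n = q^n1 * q := by rw [hnn1, pow_succ]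
      have e2 : q^n1 * q^n1 ≤ q^i * q^n := by
        rw [← pow_add, ← pow_add]
        exact pow_le_pow_of_le_one hq0.le hq1.le (by omega)
      have e3 : (2/q) * q^n = 2 * q^n1 := by rw [e1]; field_simp
      nlinarith
    linarith
  -- E4 : liminf sequence upper bound at x = γ^(2n) + γ^n
  have hE4 : ∀ i : ℕ, R (γ^(4+4*C+2*i) + γ^(2+2*C+i)) ≤ 2 + 3*q^i := by
    intro i
    set n : ℕ := 2+2*C+i with hn_def
    set N : ℕ := 4+4*C+2*i with hN_def
    set N1 : ℕ := 3+4*C+2*i with hN1_def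
    set e : ℕ := 3+3*C+2*i with he_def
    have hNN1 : N = N1 + 1 := by omega
    set x : ℝ := γ^N + γ^n with hx_def
    have hγn0 : (0:ℝ) < γ^n := by positivity
    have hx1 : γ^N ≤ x := by simp only [hx_def]; linarith
    have hx2 : x < γ^(N+1) := by
      have hg := hgap N (by omega)
      have h1 : γ^n < γ^(N-C) := pow_lt_pow_right₀ hγ (by omega)
      simp only [hx_def]
      linarith
    have hd1 : μ {ω | x < X₁ ω} = ENNReal.ofReal (q^N) := htail₁ N x hx1 hx2
    set c : ℝ := x - γ^N1 with hc_def
    have hc : γ^e ≤ c := by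
      have hg := hgap N1 (by omega)
      have hee : N1 - C = e := by omega
      rw [hee, ← hNN1] at hg
      simp only [hc_def, hx_def]
      linarith
    set A₁ : Set Ω := X₁ ⁻¹' (Set.Ioi (γ^N)) with hA1_def
    set A₂ : Set Ω := X₂ ⁻¹' (Set.Ioi (γ^N)) with hA2_def
    set B₁ : Set Ω := X₁ ⁻¹' {γ^N} ∩ X₂ ⁻¹' (Set.Ioi (γ^n)) with hB1_def
    set B₂ : Set Ω := X₂ ⁻¹' {γ^N} ∩ X₁ ⁻¹' (Set.Ioi (γ^n)) with hB2_def
    set D : Set Ω := X₁ ⁻¹' (Set.Ioi c) ∩ X₂ ⁻¹' (Set.Ioi c) with hD_def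
    have hsub : μ {ω | x < X₁ ω + X₂ ω} ≤ μ (A₁ ∪ A₂ ∪ B₁ ∪ B₂ ∪ D) := by
      refine measure_mono_ae ?_
      filter_upwards [hae₁, hae₂] with ω ⟨k1, hk1⟩ ⟨k2, hk2⟩ hmem
      have hωs : x < X₁ ω + X₂ ω := hmem
      by_cases h1 : γ^N < X₁ ω
      · exact Or.inl (Or.inl (Or.inl (Or.inl h1)))
      by_cases h2 : γ^N < X₂ ω
      · exact Or.inl (Or.inl (Or.inl (Or.inr h2)))
      push_neg at h1 h2
      by_cases hB1c : X₁ ω = γ^N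
      · refine Or.inl (Or.inl (Or.inr ⟨hB1c, ?_⟩))
        show γ^n < X₂ ω
        have : x < γ^N + X₂ ω := by rw [← hB1c]; exact hωs
        simp only [hx_def] at this
        linarith
      by_cases hB2c : X₂ ω = γ^N
      · refine Or.inl (Or.inr ⟨hB2c, ?_⟩)
        show γ^n < X₁ ω
        have : x < X₁ ω + γ^N := by rw [← hB2c]; exact hωs
        simp only [hx_def] at this
        linarith
      · -- both strictly below γ^N, hence ≤ γ^N1
        have hb1 : X₁ ω ≤ γ^N1 := by
          have hlt : γ^(k1+1) < γ^N := lt_of_le_of_ne (hk1 ▸ h1) (hk1 ▸ hB1c)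
          have : k1 + 1 < N := (pow_strictMono hγ).lt_iff_lt.1 hlt
          rw [hk1]
          exact pow_le_pow_right₀ hγ.le (by omega)
        have hb2 : X₂ ω ≤ γ^N1 := by
          have hlt : γ^(k2+1) < γ^N := lt_of_le_of_ne (hk2 ▸ h2) (hk2 ▸ hB2c)
          have : k2 + 1 < N := (pow_strictMono hγ).lt_iff_lt.1 hlt
          rw [hk2]
          exact pow_le_pow_right₀ hγ.le (by omega)
        refine Or.inr ⟨?_, ?_⟩
        · show c < X₁ ω; simp only [hc_def]; linarith
        · show c < X₂ ω; simp only [hc_def]; linarith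
    have hA1v : μ A₁ = ENNReal.ofReal (q^N) :=
      htail₁ N (γ^N) le_rfl (pow_lt_pow_right₀ hγ (by omega))
    have hA2v : μ A₂ = ENNReal.ofReal (q^N) :=
      htail₂ N (γ^N) le_rfl (pow_lt_pow_right₀ hγ (by omega))
    have hptN₁ : μ (X₁ ⁻¹' {γ^N}) = ENNReal.ofReal (q^N1 * (1-q)) := by
      have := hpt₁ N1
      rw [← hNN1] at this
      exact this
    have hptN₂ : μ (X₂ ⁻¹' {γ^N}) = ENNReal.ofReal (q^N1 * (1-q)) := by
      have := hpt₂ N1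
      rw [← hNN1] at this
      exact this
    have htailn₂ : μ (X₂ ⁻¹' (Set.Ioi (γ^n))) = ENNReal.ofReal (q^n) :=
      htail₂ n (γ^n) le_rfl (pow_lt_pow_right₀ hγ (by omega))
    have htailn₁ : μ (X₁ ⁻¹' (Set.Ioi (γ^n))) = ENNReal.ofReal (q^n) :=
      htail₁ n (γ^n) le_rfl (pow_lt_pow_right₀ hγ (by omega))
    have hB1v : μ B₁ ≤ ENNReal.ofReal (q^N1 * q^n) := by
      rw [hB1_def, hindep.measure_inter_preimage_eq_mul _ _ (measurableSet_singleton _)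
        measurableSet_Ioi, hptN₁, htailn₂,
        ← ENNReal.ofReal_mul (mul_nonneg (by positivity) (by linarith))]
      apply ENNReal.ofReal_le_ofReal
      nlinarith [mul_pos (pow_pos hq0 n) (pow_pos hq0 N1), hq0]
    have hB2v : μ B₂ ≤ ENNReal.ofReal (q^N1 * q^n) := by
      have hswap : μ B₂ = μ (X₁ ⁻¹' (Set.Ioi (γ^n)) ∩ X₂ ⁻¹' {γ^N}) := by
        rw [hB2_def, Set.inter_comm]
      rw [hswap, hindep.measure_inter_preimage_eq_mul _ _ measurableSet_Ioi
        (measurableSet_singleton _), htailn₁, hptN₂,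
        ← ENNReal.ofReal_mul (by positivity)]
      apply ENNReal.ofReal_le_ofReal
      nlinarith [mul_pos (pow_pos hq0 n) (pow_pos hq0 N1), hq0]
    have hDv : μ D ≤ ENNReal.ofReal (q^e * q^e) := by
      calc μ D = μ (X₁ ⁻¹' (Set.Ioi c)) * μ (X₂ ⁻¹' (Set.Ioi c)) := by
            rw [hD_def, hindep.measure_inter_preimage_eq_mul _ _ measurableSet_Ioi
              measurableSet_Ioi]
      _ ≤ ENNReal.ofReal (q^e) * ENNReal.ofReal (q^e) :=
            mul_le_mul' (tail_le hγ hU₁ hae₁ hc) (tail_le hγ hU₂ hae₂ hc)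
      _ = ENNReal.ofReal (q^e * q^e) := (ENNReal.ofReal_mul (by positivity)).symm
    have hmu2 : μ {ω | x < X₁ ω + X₂ ω}
        ≤ ENNReal.ofReal (2*q^N + 2*(q^N1*q^n) + q^e*q^e) := by
      calc μ {ω | x < X₁ ω + X₂ ω} ≤ μ (A₁ ∪ A₂ ∪ B₁ ∪ B₂ ∪ D) := hsub
      _ ≤ μ (A₁ ∪ A₂ ∪ B₁ ∪ B₂) + μ D := measure_union_le _ _
      _ ≤ (μ (A₁ ∪ A₂ ∪ B₁) + μ B₂) + μ D :=
            add_le_add_left (measure_union_le _ _) _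
      _ ≤ ((μ (A₁ ∪ A₂) + μ B₁) + μ B₂) + μ D :=
            add_le_add_left (add_le_add_left (measure_union_le _ _) _) _
      _ ≤ (((μ A₁ + μ A₂) + μ B₁) + μ B₂) + μ D :=
            add_le_add_left (add_le_add_left (add_le_add_left (measure_union_le _ _) _) _) _
      _ ≤ (((ENNReal.ofReal (q^N) + ENNReal.ofReal (q^N)) + ENNReal.ofReal (q^N1*q^n))
            + ENNReal.ofReal (q^N1*q^n)) + ENNReal.ofReal (q^e*q^e) := by
          exact add_le_add (add_le_add (add_le_add (add_le_add hA1v.le hA2v.le) hB1v) hB2v) hDv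
      _ = ENNReal.ofReal (2*q^N + 2*(q^N1*q^n) + q^e*q^e) := by
          rw [← ENNReal.ofReal_add (by positivity) (by positivity),
            ← ENNReal.ofReal_add (by positivity) (by positivity),
            ← ENNReal.ofReal_add (by positivity) (by positivity),
            ← ENNReal.ofReal_add (by positivity) (by positivity)]
          congr 1
          ring
    have hnumr : (μ {ω | x < X₁ ω + X₂ ω}).toReal ≤ 2*q^N + 2*(q^N1*q^n) + q^e*q^e := by
      have := ENNReal.toReal_mono ENNReal.ofReal_ne_top hmu2
      rwa [ENNReal.toReal_ofReal (by positivity)] at this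
    have hqN0 : (0:ℝ) < q^N := by positivity
    show (μ {ω | x < X₁ ω + X₂ ω}).toReal / (μ {ω | x < X₁ ω}).toReal ≤ 2 + 3*q^i
    rw [hd1, ENNReal.toReal_ofReal hqN0.le, div_le_iff₀ hqN0]
    have e1 : q^N1 * q^n ≤ q^i * q^N := by
      rw [← pow_add, ← pow_add]
      exact pow_le_pow_of_le_one hq0.le hq1.le (by omega)
    have e2 : q^e * q^e ≤ q^i * q^N := by
      rw [← pow_add, ← pow_add]
      exact pow_le_pow_of_le_one hq0.le hq1.le (by omega)
    nlinarith [pow_pos hq0 i, pow_pos hq0 N]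
  -- sequences tend to infinity
  have hpow : Tendsto (fun i : ℕ => γ^i) atTop atTop := tendsto_pow_atTop_atTop_of_one_lt hγ
  have hidx1 : Tendsto (fun i : ℕ => 2+2*C+i) atTop atTop :=
    tendsto_atTop_atTop.2 fun b => ⟨b, fun a ha => by omega⟩
  have hidx2 : Tendsto (fun i : ℕ => 4+4*C+2*i) atTop atTop :=
    tendsto_atTop_atTop.2 fun b => ⟨b, fun a ha => by omega⟩
  have hxseq : Tendsto (fun i : ℕ => γ^(2+2*C+i) + 1) atTop atTop :=
    tendsto_atTop_mono (fun i => by linarith [le_refl (γ^(2+2*C+i))] :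
      ∀ i : ℕ, γ^(2+2*C+i) ≤ γ^(2+2*C+i) + 1) (hpow.comp hidx1)
  have hyseq : Tendsto (fun i : ℕ => γ^(4+4*C+2*i) + γ^(2+2*C+i)) atTop atTop :=
    tendsto_atTop_mono (fun i => by nlinarith [pow_pos hγ0 (2+2*C+i)] :
      ∀ i : ℕ, γ^(4+4*C+2*i) ≤ γ^(4+4*C+2*i) + γ^(2+2*C+i)) (hpow.comp hidx2)
  -- boundedness
  have hev1 : ∀ᶠ x in atTop, R x ≤ 2/q + 1 := by
    filter_upwards [eventually_ge_atTop (γ^(2+2*C+0))] with x hx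
    have := hE1 0 x hx
    simpa using this
  have hbd_le : IsBoundedUnder (· ≤ ·) atTop R := ⟨2/q + 1, eventually_map.2 hev1⟩
  have hbd_ge : IsBoundedUnder (· ≥ ·) atTop R :=
    ⟨0, eventually_map.2 (Eventually.of_forall hRnonneg)⟩
  have hcob_le : IsCoboundedUnder (· ≤ ·) atTop R := hbd_ge.isCoboundedUnder_le
  have hcob_ge : IsCoboundedUnder (· ≥ ·) atTop R := hbd_le.isCoboundedUnder_ge
  constructor
  · -- liminf = 2
    refine le_antisymm ?_ ?_
    · -- liminf ≤ 2
      refine le_of_forall_pos_le_add fun ε hε => ?_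
      obtain ⟨i, hi⟩ := exists_pow_lt_of_lt_one (show (0:ℝ) < ε/3 by linarith) hq1
      refine liminf_le_of_frequently_le ?_ hbd_ge
      rw [frequently_atTop]
      intro a
      obtain ⟨i', hii', hai'⟩ : ∃ i', i ≤ i' ∧ a ≤ γ^(4+4*C+2*i') + γ^(2+2*C+i') := by
        obtain ⟨i', h1, h2⟩ := ((eventually_ge_atTop i).and
          (hyseq.eventually_ge_atTop a)).exists
        exact ⟨i', h1, h2⟩
      refine ⟨γ^(4+4*C+2*i') + γ^(2+2*C+i'), hai', ?_⟩
      have h1 := hE4 i'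
      have h2 : q^i' ≤ q^i := pow_le_pow_of_le_one hq0.le hq1.le hii'
      linarith
    · -- 2 ≤ liminf
      refine le_of_forall_pos_le_add fun ε hε => ?_
      obtain ⟨i, hi⟩ := exists_pow_lt_of_lt_one hε hq1
      have hev : ∀ᶠ x in atTop, 2 - ε ≤ R x := by
        filter_upwards [eventually_ge_atTop (γ^(i+1))] with x hx
        have := hE2 (i+1) (by omega) x hx
        have h2 : q^(i+1) ≤ q^i := pow_le_pow_of_le_one hq0.le hq1.le (by omega)
        linarith
      have := le_liminf_of_le hcob_ge hev
      linarith
  · -- limsup = 2/q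
    refine le_antisymm ?_ ?_
    · -- limsup ≤ 2/q
      refine le_of_forall_pos_le_add fun ε hε => ?_
      obtain ⟨i, hi⟩ := exists_pow_lt_of_lt_one hε hq1
      refine limsup_le_of_le hcob_le ?_
      filter_upwards [eventually_ge_atTop (γ^(2+2*C+i))] with x hx
      have := hE1 i x hx
      linarith
    · -- 2/q ≤ limsup
      refine le_of_forall_pos_le_add fun ε hε => ?_
      obtain ⟨i, hi⟩ := exists_pow_lt_of_lt_one hε hq1
      have hfreq : ∃ᶠ x in atTop, 2/q - ε ≤ R x := by
        rw [frequently_atTop]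
        intro a
        obtain ⟨i', hii', hai'⟩ : ∃ i', i ≤ i' ∧ a ≤ γ^(2+2*C+i') + 1 := by
          obtain ⟨i', h1, h2⟩ := ((eventually_ge_atTop i).and
            (hxseq.eventually_ge_atTop a)).exists
          exact ⟨i', h1, h2⟩
        refine ⟨γ^(2+2*C+i') + 1, hai', ?_⟩
        have h1 := hE3 i'
        have h2 : q^i' ≤ q^i := pow_le_pow_of_le_one hq0.le hq1.le hii'
        linarith
      have := le_limsup_of_frequently_le hfreq hbd_le
      linarith
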